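/- For any monomial order ≺ on the polynomial ring k[x_0,…,x_n] and any finite subset A of monomials (identified with exponent vectors in ℕ^{n+1}), there exists a weight vector ω ∈ ℕ^{n+1} such that for all α, β ∈ A, α ≺ β if and only if ω·α < ω·β (the ordinary inner product). -/

import Mathlib

/-- Monomials in `n+1` variables, identified with exponent vectors. -/
abbrev Mon (n : ℕ) := Fin (n + 1) →₀ ℕ

/-- The inner product `ω·α = ω₀α₀ + ⋯ + ωₙαₙ`. -/
def wdot {n : ℕ} (ω : Fin (n + 1) → ℕ) (α : Mon n) : ℕ := ∑ i, ω i * α i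

/-- A monomial order on `k[x₀,…,xₙ]`, viewed as a relation on exponent vectors:
a strict linear order which is well-founded, has `1 = x^0` as least element and is
compatible with multiplication of monomials. -/
def IsMonomialOrder {n : ℕ} (r : Mon n → Mon n → Prop) : Prop :=
  (∀ α β : Mon n, r α β ∨ α = β ∨ r β α) ∧
  (∀ α β γ : Mon n, r α β → r β γ → r α γ) ∧
  (∀ α : Mon n, ¬ r α α) ∧
  WellFounded r ∧
  (∀ α : Mon n, α ≠ 0 → r 0 α) ∧
  (∀ α β γ : Mon n, r α β → r (α + γ) (β + γ))

/-! ### Auxiliary material: a Gordan-type theorem -/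

/-- integer dot product with a natural weight vector -/
def idot {d : ℕ} (ω : Fin d → ℕ) (v : Fin d → ℤ) : ℤ := ∑ i, (ω i : ℤ) * v i

lemma idot_add {d : ℕ} (ω : Fin d → ℕ) (v w : Fin d → ℤ) :
    idot ω (v + w) = idot ω v + idot ω w := by
  simp [idot, mul_add, Finset.sum_add_distrib]

lemma idot_smul {d : ℕ} (ω : Fin d → ℕ) (c : ℤ) (v : Fin d → ℤ) :
    idot ω (c • v) = c * idot ω v := by
  simp only [idot, Pi.smul_apply, smul_eq_mul, Finset.mul_sum]
  apply Finset.sum_congr rfl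
  intro i _
  ring

lemma list_sum_apply {d : ℕ} (L : List (Fin d → ℤ)) (i : Fin d) :
    L.sum i = (L.map (fun v => v i)).sum := by
  induction L with
  | nil => rfl
  | cons a L ih => simp [ih]

/-- **Gordan-type theorem**: if no nonempty multiset drawn from a finite set `V ⊆ ℤ^d`
has sum with all coordinates `≤ 0`, then there is a nonnegative integer weight vector
having positive dot product with every element of `V`. -/
lemma gordan : ∀ (d : ℕ) (V : Finset (Fin d → ℤ)),
    (∀ L : List (Fin d → ℤ), L ≠ [] → (∀ v ∈ L, v ∈ V) → ∃ i, 0 < L.sum i) →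
    ∃ ω : Fin d → ℕ, ∀ v ∈ V, 0 < idot ω v := by
  intro d
  induction d with
  | zero =>
    intro V H
    refine ⟨0, fun v hv => ?_⟩
    obtain ⟨i, _⟩ := H [v] (by simp) (by simp [hv])
    exact i.elim0
  | succ d ih =>
    intro V H
    classical
    set l : Fin (d + 1) := Fin.last d with hl
    set P := V.filter (fun v => 0 < v l) with hPdef
    set N := V.filter (fun v => v l < 0) with hNdef
    set Z := V.filter (fun v => v l = 0) with hZdef
    set V' : Finset (Fin d → ℤ) :=
      ((Z ∪ N).image Fin.init) ∪
      ((P ×ˢ N).image (fun pn => Fin.init ((-(pn.2 l)) • pn.1 + (pn.1 l) • pn.2))) with hV'def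
    -- every element of V' lifts to a nonempty list in V with nonpositive last coord
    have lift : ∀ w ∈ V', ∃ Lw : List (Fin (d+1) → ℤ),
        (∀ v ∈ Lw, v ∈ V) ∧ Lw ≠ [] ∧ Fin.init Lw.sum = w ∧ Lw.sum l ≤ 0 := by
      intro w hw
      rw [hV'def, Finset.mem_union] at hw
      rcases hw with hw | hw
      · obtain ⟨z, hz, rfl⟩ := Finset.mem_image.mp hw
        rw [Finset.mem_union] at hz
        refine ⟨[z], ?_, by simp, by simp, ?_⟩
        · intro v hv; simp at hv; subst hv
          rcases hz with h | h
          · exact (Finset.mem_filter.mp h).1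
          · exact (Finset.mem_filter.mp h).1
        · simp only [List.sum_cons, List.sum_nil, add_zero]
          rcases hz with h | h
          · exact le_of_eq (Finset.mem_filter.mp h).2
          · exact le_of_lt (Finset.mem_filter.mp h).2
      · obtain ⟨⟨p, n⟩, hpn, rfl⟩ := Finset.mem_image.mp hw
        rw [Finset.mem_product] at hpn
        obtain ⟨hp, hn⟩ := hpn
        have hpl : 0 < p l := (Finset.mem_filter.mp hp).2
        have hnl : n l < 0 := (Finset.mem_filter.mp hn).2
        have hsum : (List.replicate (-(n l)).toNat p ++ List.replicate (p l).toNat n).sum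
            = (-(n l)) • p + (p l) • n := by
          rw [List.sum_append, List.sum_replicate, List.sum_replicate]
          congr 1
          · rw [← natCast_zsmul, Int.toNat_of_nonneg (by omega : (0:ℤ) ≤ -(n l))]
          · rw [← natCast_zsmul, Int.toNat_of_nonneg (by omega : (0:ℤ) ≤ p l)]
        refine ⟨List.replicate (-(n l)).toNat p ++ List.replicate (p l).toNat n,
          ?_, ?_, ?_, ?_⟩
        · intro v hv
          simp only [List.mem_append, List.mem_replicate] at hv
          rcases hv with ⟨_, rfl⟩ | ⟨_, rfl⟩
          · exact (Finset.mem_filter.mp hp).1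
          · exact (Finset.mem_filter.mp hn).1
        · have h1 : (-(n l)).toNat ≠ 0 := by omega
          simp [h1]
        · rw [hsum]
        · have : ((-(n l)) • p + (p l) • n) l = (-(n l)) * p l + (p l) * n l := by
            simp [mul_comm]
          rw [hsum, this]; ring_nf; omega
    -- V' satisfies the hypothesis
    have HV' : ∀ L : List (Fin d → ℤ), L ≠ [] → (∀ w ∈ L, w ∈ V') → ∃ i, 0 < L.sum i := by
      intro L hLne hLV
      by_contra hcon
      push_neg at hcon
      have hlift : ∃ Lv : List (Fin (d+1) → ℤ), (∀ v ∈ Lv, v ∈ V) ∧ Lv ≠ [] ∧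
          Fin.init Lv.sum = L.sum ∧ Lv.sum l ≤ 0 := by
        clear hcon
        induction L with
        | nil => exact absurd rfl hLne
        | cons w L ihL =>
          obtain ⟨Lw, hLw1, hLw2, hLw3, hLw4⟩ := lift w (hLV w (by simp))
          rcases L with _ | ⟨w2, L2⟩
          · exact ⟨Lw, hLw1, hLw2, by simpa using hLw3, hLw4⟩
          · obtain ⟨Lv, h1, h2, h3, h4⟩ := ihL (by simp) (fun x hx => hLV x (by simp [hx]))
            refine ⟨Lw ++ Lv, ?_, by simp [hLw2], ?_, ?_⟩
            · intro v hv; rcases List.mem_append.mp hv with h | h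
              · exact hLw1 v h
              · exact h1 v h
            · rw [List.sum_append, List.sum_cons]
              funext i
              have e1 := congrFun hLw3 i
              have e2 := congrFun h3 i
              simp only [Fin.init, Pi.add_apply] at e1 e2 ⊢
              rw [e1, e2]
            · rw [List.sum_append]; simp only [Pi.add_apply]; omega
      obtain ⟨Lv, h1, h2, h3, h4⟩ := hlift
      obtain ⟨i, hi⟩ := H Lv h2 h1
      refine Fin.lastCases (motive := fun i => 0 < Lv.sum i → False) ?_ ?_ i hi
      · intro h
        have h4' : Lv.sum (Fin.last d) ≤ 0 := h4
        omega
      · intro j hj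
        have := hcon j
        have e := congrFun h3 j
        simp only [Fin.init] at e
        omega
    obtain ⟨ω', hω'⟩ := ih V' HV'
    -- key positivity facts
    set a : (Fin (d+1) → ℤ) → ℤ := fun v => idot ω' (Fin.init v) with hadef
    have init_add : ∀ v w : Fin (d+1) → ℤ, Fin.init (v + w) = Fin.init v + Fin.init w := by
      intro v w; funext i; simp [Fin.init]
    have init_smul : ∀ (c : ℤ) (v : Fin (d+1) → ℤ), Fin.init (c • v) = c • Fin.init v := by
      intro c v; funext i; simp [Fin.init]
    have hZN : ∀ v ∈ Z ∪ N, 0 < a v := by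
      intro v hv
      exact hω' _ (Finset.mem_union_left _ (Finset.mem_image_of_mem _ hv))
    have hPN : ∀ p ∈ P, ∀ n ∈ N, 0 < (-(n l)) * a p + (p l) * a n := by
      intro p hp n hn
      have hprod : (p, n) ∈ P ×ˢ N := Finset.mem_product.mpr ⟨hp, hn⟩
      have h := hω' _ (Finset.mem_union_right _
        (Finset.mem_image_of_mem (fun pn => Fin.init ((-(pn.2 l)) • pn.1 + (pn.1 l) • pn.2))
          hprod))
      rw [init_add, init_smul, init_smul, idot_add, idot_smul, idot_smul] at h
      exact h
    -- choose a rational slope q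
    set fp : (Fin (d+1) → ℤ) → ℚ := fun p => (-(a p) : ℚ) / ((p l : ℤ) : ℚ) with hfp
    set fn : (Fin (d+1) → ℤ) → ℚ := fun n => ((a n : ℤ) : ℚ) / ((-(n l) : ℤ) : ℚ) with hfn
    set S : Finset ℚ := insert (0:ℚ) (P.image fp) with hSdef
    have hSne : S.Nonempty := Finset.insert_nonempty _ _
    set Lq : ℚ := S.max' hSne with hLq
    have hL0 : 0 ≤ Lq := Finset.le_max' _ _ (Finset.mem_insert_self _ _)
    have hLfp : ∀ p ∈ P, fp p ≤ Lq := fun p hp =>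
      Finset.le_max' _ _ (Finset.mem_insert_of_mem (Finset.mem_image_of_mem _ hp))
    have key : ∃ q : ℚ, 0 < q ∧ (∀ p ∈ P, fp p < q) ∧ (∀ n ∈ N, q < fn n) := by
      by_cases hNe : N.Nonempty
      · set U : ℚ := (N.image fn).min' (hNe.image _) with hU
        have hUfn : ∀ n ∈ N, U ≤ fn n := fun n hn =>
          Finset.min'_le _ _ (Finset.mem_image_of_mem _ hn)
        have hLU : Lq < U := by
          obtain ⟨n0, hn0, hUn0⟩ :=
            Finset.mem_image.mp (Finset.min'_mem (N.image fn) (hNe.image _))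
          have hUn0' : U = fn n0 := by rw [hU, hUn0]
          have hn0l : n0 l < 0 := (Finset.mem_filter.mp hn0).2
          have han0 : 0 < a n0 := hZN n0 (Finset.mem_union_right _ hn0)
          have hnum : (0:ℚ) < ((a n0 : ℤ) : ℚ) := by exact_mod_cast han0
          have hden : (0:ℚ) < ((-(n0 l) : ℤ) : ℚ) := by
            have : (0:ℤ) < -(n0 l) := by omega
            exact_mod_cast this
          have hUpos : 0 < U := by
            rw [hUn0', hfn]
            exact div_pos hnum hden
          have hall : ∀ x ∈ S, x < U := by
            intro x hx
            rw [hSdef, Finset.mem_insert] at hx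
            rcases hx with rfl | hx
            · exact hUpos
            · obtain ⟨p, hp, rfl⟩ := Finset.mem_image.mp hx
              have hpl : 0 < p l := (Finset.mem_filter.mp hp).2
              have hplQ : (0:ℚ) < ((p l : ℤ) : ℚ) := by exact_mod_cast hpl
              rw [hUn0', hfp, hfn, div_lt_div_iff₀ hplQ hden]
              have hcross := hPN p hp n0 hn0
              have : (-(a p)) * (-(n0 l)) < (a n0) * (p l) := by nlinarith [hcross]
              exact_mod_cast this
          exact hall Lq (Finset.max'_mem _ _)
        refine ⟨(Lq + U)/2, by linarith, ?_, ?_⟩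
        · intro p hp; have := hLfp p hp; linarith
        · intro n hn; have := hUfn n hn; linarith
      · refine ⟨Lq + 1, by linarith, ?_, ?_⟩
        · intro p hp; have := hLfp p hp; linarith
        · intro n hn; exact absurd (⟨n, hn⟩ : N.Nonempty) hNe
    obtain ⟨q, hq0, hqP, hqN⟩ := key
    -- positivity over ℚ for all of V
    have hposQ : ∀ v ∈ V, 0 < ((a v : ℤ) : ℚ) + q * ((v l : ℤ) : ℚ) := by
      intro v hv
      rcases lt_trichotomy (v l) 0 with h | h | h
      · have hn : v ∈ N := Finset.mem_filter.mpr ⟨hv, h⟩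
        have hlt := hqN v hn
        have hden : (0:ℚ) < ((-(v l) : ℤ) : ℚ) := by
          have : (0:ℤ) < -(v l) := by omega
          exact_mod_cast this
        rw [hfn, lt_div_iff₀ hden] at hlt
        have : ((-(v l) : ℤ) : ℚ) = -(((v l : ℤ)) : ℚ) := by push_cast; ring
        rw [this] at hlt
        linarith
      · have hz : v ∈ Z := Finset.mem_filter.mpr ⟨hv, h⟩
        have := hZN v (Finset.mem_union_left _ hz)
        have ha : (0:ℚ) < ((a v : ℤ) : ℚ) := by exact_mod_cast this
        rw [h]
        push_cast
        linarith
      · have hp : v ∈ P := Finset.mem_filter.mpr ⟨hv, h⟩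
        have hlt := hqP v hp
        have hden : (0:ℚ) < ((v l : ℤ) : ℚ) := by exact_mod_cast h
        rw [hfp, div_lt_iff₀ hden] at hlt
        have : (-(a v) : ℚ) = -((a v : ℤ) : ℚ) := by push_cast; ring
        rw [this] at hlt
        linarith
    -- turn q into natural numbers
    set m : ℕ := q.num.toNat with hm
    set kk : ℕ := q.den with hkk
    have hkpos : 0 < kk := q.pos
    have hmQ : ((m : ℤ) : ℚ) = q * (kk : ℚ) := by
      have h1 : (m : ℤ) = q.num := Int.toNat_of_nonneg (le_of_lt (Rat.num_pos.mpr hq0))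
      have h2 : ((kk : ℚ)) ≠ 0 := by
        have : 0 < kk := q.pos
        positivity
      rw [h1]
      exact (div_eq_iff h2).mp (Rat.num_div_den q)
    refine ⟨Fin.snoc (fun j => kk * ω' j) m, ?_⟩
    intro v hv
    have hcalc : idot (Fin.snoc (fun j => kk * ω' j) m) v = (kk : ℤ) * a v + (m : ℤ) * v l := by
      unfold idot
      rw [Fin.sum_univ_castSucc]
      congr 1
      · rw [hadef]
        unfold idot
        rw [Finset.mul_sum]
        apply Finset.sum_congr rfl
        intro j _
        rw [Fin.snoc_castSucc]
        have : Fin.init v j = v j.castSucc := rfl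
        rw [this]
        push_cast
        ring
      · rw [Fin.snoc_last]
    rw [hcalc]
    have hQ : (0:ℚ) < (kk : ℚ) * ((a v : ℤ) : ℚ) + ((m : ℤ) : ℚ) * ((v l : ℤ) : ℚ) := by
      rw [hmQ]
      have h1 := hposQ v hv
      have h2 : (0:ℚ) < (kk:ℚ) := by exact_mod_cast hkpos
      calc (0:ℚ) < (kk:ℚ) * (((a v : ℤ) : ℚ) + q * ((v l : ℤ) : ℚ)) := by positivity
        _ = (kk : ℚ) * ((a v : ℤ) : ℚ) + q * (kk : ℚ) * ((v l : ℤ) : ℚ) := by ring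
    exact_mod_cast hQ

/-! ### From monomial orders to the Gordan hypothesis -/

/-- coercion of an exponent vector to an integer vector -/
def c2z {n : ℕ} (α : Mon n) : Fin (n + 1) → ℤ := fun i => (α i : ℤ)

lemma c2z_add {n : ℕ} (α β : Mon n) : c2z (α + β) = c2z α + c2z β := by
  funext i
  simp [c2z]

/-- **Bayer's weight vector lemma.** For any monomial order `≺` on `k[x₀,…,xₙ]` and any
finite set `A` of monomials, there is a weight vector `ω ∈ ℕ^{n+1}` such that for all
`α, β ∈ A`, `α ≺ β` iff `ω·α < ω·β`. -/
theorem weight_vector_represents_monomial_order {n : ℕ} (k : Type*) [Field k]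
    (r : Mon n → Mon n → Prop) (hr : IsMonomialOrder r) (A : Finset (Mon n)) :
    ∃ ω : Fin (n + 1) → ℕ, ∀ α ∈ A, ∀ β ∈ A, (r α β ↔ wdot ω α < wdot ω β) := by
  classical
  obtain ⟨htot, htrans, hirr, _, hzero, haddc⟩ := hr
  have hadd2 : ∀ α β γ δ : Mon n, r α β → r γ δ → r (α + γ) (β + δ) := by
    intro α β γ δ h1 h2
    refine htrans _ (β + γ) _ (haddc _ _ _ h1) ?_
    rw [add_comm β γ, add_comm β δ]
    exact haddc _ _ _ h2
  set V : Finset (Fin (n+1) → ℤ) :=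
    ((A ×ˢ A).filter (fun p => r p.1 p.2)).image (fun p => c2z p.2 - c2z p.1) with hVdef
  have hmemV : ∀ v ∈ V, ∃ α β : Mon n, r α β ∧ v = c2z β - c2z α := by
    intro v hv
    rw [hVdef, Finset.mem_image] at hv
    obtain ⟨⟨α, β⟩, hp, rfl⟩ := hv
    exact ⟨α, β, (Finset.mem_filter.mp hp).2, rfl⟩
  have claim : ∀ L : List (Fin (n+1) → ℤ), L ≠ [] → (∀ v ∈ L, v ∈ V) →
      ∃ α β : Mon n, r α β ∧ L.sum = c2z β - c2z α := by
    intro L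
    induction L with
    | nil => intro h; exact absurd rfl h
    | cons w L ihL =>
      intro _ hmem
      obtain ⟨α₁, β₁, hr1, hw⟩ := hmemV w (hmem w (by simp))
      rcases L with _ | ⟨w2, L2⟩
      · exact ⟨α₁, β₁, hr1, by simp [hw]⟩
      · obtain ⟨α₂, β₂, hr2, hs⟩ := ihL (by simp) (fun x hx => hmem x (by simp [hx]))
        refine ⟨α₁ + α₂, β₁ + β₂, hadd2 _ _ _ _ hr1 hr2, ?_⟩
        rw [List.sum_cons, hw, hs, c2z_add, c2z_add]
        abel
  have H : ∀ L : List (Fin (n+1) → ℤ), L ≠ [] → (∀ v ∈ L, v ∈ V) → ∃ i, 0 < L.sum i := by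
    intro L hne hmem
    by_contra hcon
    push_neg at hcon
    obtain ⟨α, β, hαβ, hsum⟩ := claim L hne hmem
    have hle : ∀ i, β i ≤ α i := by
      intro i
      have := hcon i
      rw [hsum] at this
      simp only [Pi.sub_apply, c2z] at this
      omega
    set δ : Mon n := α - β with hδ
    have hβδ : β + δ = α := by
      ext i
      simp only [Finsupp.add_apply, hδ, Finsupp.tsub_apply]
      have := hle i
      omega
    by_cases hδ0 : δ = 0
    · rw [hδ0, add_zero] at hβδ
      subst hβδ
      exact hirr _ hαβ
    · have h1 : r 0 δ := hzero δ hδ0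
      have h2 : r β α := by
        have := haddc 0 δ β h1
        rw [zero_add, add_comm δ β, hβδ] at this
        exact this
      exact hirr α (htrans _ _ _ hαβ h2)
  obtain ⟨ω, hω⟩ := gordan (n + 1) V H
  refine ⟨ω, ?_⟩
  have hdot : ∀ α β : Mon n, idot ω (c2z β - c2z α) = (wdot ω β : ℤ) - (wdot ω α : ℤ) := by
    intro α β
    unfold idot wdot
    push_cast
    rw [← Finset.sum_sub_distrib]
    apply Finset.sum_congr rfl
    intro i _
    simp only [Pi.sub_apply, c2z]
    ring
  intro α hα β hβ
  constructor
  · intro h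
    have hvV : c2z β - c2z α ∈ V := by
      rw [hVdef, Finset.mem_image]
      exact ⟨(α, β), Finset.mem_filter.mpr ⟨Finset.mem_product.mpr ⟨hα, hβ⟩, h⟩, rfl⟩
    have := hω _ hvV
    rw [hdot] at this
    omega
  · intro h
    rcases htot α β with h1 | h1 | h1
    · exact h1
    · subst h1; omega
    · have hvV : c2z α - c2z β ∈ V := by
        rw [hVdef, Finset.mem_image]
        exact ⟨(β, α), Finset.mem_filter.mpr ⟨Finset.mem_product.mpr ⟨hβ, hα⟩, h1⟩, rfl⟩
      have := hω _ hvV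
      rw [hdot] at this
      omega
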